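/- There exists a set A ⊆ ℕ that is infinite and co-infinite with the following property. Call a sequence p : ℕ → Bool an A-name if {n | p n = true} ⊆ A and A \ {n | p n = true} is finite, and call p a coA-name if {n | p n = true} ⊆ ℕ \ A and (ℕ \ A) \ {n | p n = true} is finite. Then there is NO computably enumerable set W of pairs (w, u) of finite Boolean strings satisfying both: (soundness) for every (w, u) ∈ W and all sequences p, q : ℕ → Bool with w a prefix of p and u a prefix of q, it is not the case that p and q are both A-names, and not the case that p and q are both coA-names; and (completeness) for all sequences p, q : ℕ → Bool such that one of them is an A-name and the other is a coA-name, there exists (w, u) ∈ W with w a prefix of p and u a prefix of q. -/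

import Mathlib

/-- A finite boolean string `w` is a prefix of the sequence `p : ℕ → Bool`. -/
def IsBoolPrefix (w : List Bool) (p : ℕ → Bool) : Prop :=
  ∀ i : ℕ, ∀ h : i < w.length, p i = w.get ⟨i, h⟩

/-- `p` is a name of the point `a` of `D_A`: it is obtained from the characteristic
function of `A` by turning finitely many `1`s into `0`s. -/
def IsAName (A : Set ℕ) (p : ℕ → Bool) : Prop :=
  {n : ℕ | p n = true} ⊆ A ∧ (A \ {n : ℕ | p n = true}).Finite

/-- `p` is a name of the point `b` of `D_A`: it is obtained from the characteristic
function of `ℕ \ A` by turning finitely many `1`s into `0`s. -/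
def IsCoAName (A : Set ℕ) (p : ℕ → Bool) : Prop :=
  {n : ℕ | p n = true} ⊆ Aᶜ ∧ (Aᶜ \ {n : ℕ | p n = true}).Finite

namespace DAHaus

open scoped Classical

/-- The `e`-th c.e. set of pairs of boolean strings. -/
def FSet (e : ℕ) : Set (List Bool × List Bool) :=
  {x | ((Denumerable.ofNat Nat.Partrec.Code e).eval (Encodable.encode x)).Dom}

lemma exists_index {W : Set (List Bool × List Bool)} (h : REPred (fun wu => wu ∈ W)) :
    ∃ e : ℕ, W = FSet e := by
  unfold REPred Partrec at h
  obtain ⟨c, hc⟩ := Nat.Partrec.Code.exists_code.1 h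
  refine ⟨Encodable.encode c, ?_⟩
  ext x
  simp only [FSet, Set.mem_setOf_eq, Denumerable.ofNat_encode, hc, Encodable.encodek]
  simp [Part.assert]

/-- All `true` positions of `w` are `≥ N`. -/
def HighTrue (w : List Bool) (N : ℕ) : Prop := ∀ i : ℕ, w.getD i false = true → N ≤ i

/-- The question asked at stage `e` with current length `N`. -/
def Q (e N : ℕ) : Prop := ∃ wu ∈ FSet e, HighTrue wu.1 N ∧ HighTrue wu.2 N

/-- One step of the construction. -/
noncomputable def ext1 (e N : ℕ) (f : ℕ → Bool) : ℕ × (ℕ → Bool) :=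
  if h : Q e N then
    (N + (Classical.choose h).1.length + (Classical.choose h).2.length + 2,
     fun n => if n < N then f n
       else ((Classical.choose h).1.getD n false || (Classical.choose h).2.getD n false ||
         decide (n = N + (Classical.choose h).1.length + (Classical.choose h).2.length)))
  else (N + 2, fun n => if n < N then f n else decide (n = N))

noncomputable def st : ℕ → ℕ × (ℕ → Bool) := fun e =>
  Nat.rec ((0 : ℕ), fun _ => false) (fun e ih => ext1 e ih.1 ih.2) e

noncomputable def NN (e : ℕ) : ℕ := (st e).1
noncomputable def bit (e : ℕ) : ℕ → Bool := (st e).2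

lemma st_succ (e : ℕ) : st (e + 1) = ext1 e (NN e) (bit e) := rfl

lemma grow (e : ℕ) : NN e + 2 ≤ NN (e + 1) := by
  show NN e + 2 ≤ (ext1 e (NN e) (bit e)).1
  rw [ext1]
  split <;> simp <;> omega

lemma Nmono : Monotone NN := by
  apply monotone_nat_of_le_succ
  intro e; have := grow e; omega

lemma N_ge (e : ℕ) : 2 * e ≤ NN e := by
  induction e with
  | zero => simp
  | succ k ih => have := grow k; omega

lemma stable (e n : ℕ) (h : n < NN e) : bit (e + 1) n = bit e n := by
  show (ext1 e (NN e) (bit e)).2 n = bit e n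
  rw [ext1]
  split <;> simp [h]

lemma stable' (e e' : ℕ) (he : e ≤ e') (n : ℕ) (h : n < NN e) : bit e' n = bit e n := by
  induction e', he using Nat.le_induction with
  | base => rfl
  | succ k hk ih =>
    rw [stable k n (lt_of_lt_of_le h (Nmono hk)), ih]

/-- The diagonal set. -/
def A : Set ℕ := {n | bit (n + 1) n = true}

lemma n_lt_NN_succ (n : ℕ) : n < NN (n + 1) := by
  have := N_ge (n + 1); omega

lemma memA (e n : ℕ) (h : n < NN e) : n ∈ A ↔ bit e n = true := by
  rcases le_total e (n + 1) with h' | h'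
  · have := stable' e (n + 1) h' n h
    exact (by rw [A, Set.mem_setOf_eq, this])
  · have := stable' (n + 1) e h' n (n_lt_NN_succ n)
    rw [A, Set.mem_setOf_eq, this]

section stage

variable (e : ℕ)

lemma yes_case (h : Q e (NN e)) :
    NN (e + 1) = NN e + (Classical.choose h).1.length + (Classical.choose h).2.length + 2 ∧
    ∀ n, bit (e + 1) n = if n < NN e then bit e n
      else ((Classical.choose h).1.getD n false || (Classical.choose h).2.getD n false ||
        decide (n = NN e + (Classical.choose h).1.length + (Classical.choose h).2.length)) := by
  constructor
  · show (ext1 e (NN e) (bit e)).1 = _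
    rw [ext1, dif_pos h]
  · intro n
    show (ext1 e (NN e) (bit e)).2 n = _
    rw [ext1, dif_pos h]

lemma no_case (h : ¬ Q e (NN e)) :
    NN (e + 1) = NN e + 2 ∧
    ∀ n, bit (e + 1) n = if n < NN e then bit e n else decide (n = NN e) := by
  constructor
  · show (ext1 e (NN e) (bit e)).1 = _
    rw [ext1, dif_neg h]
  · intro n
    show (ext1 e (NN e) (bit e)).2 n = _
    rw [ext1, dif_neg h]

lemma exists_in : ∃ n, NN e ≤ n ∧ n ∈ A := by
  by_cases h : Q e (NN e)
  · obtain ⟨hN, hb⟩ := yes_case e h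
    set K := NN e + (Classical.choose h).1.length + (Classical.choose h).2.length with hK
    refine ⟨K, by omega, ?_⟩
    rw [memA (e+1) K (by omega), hb K]
    simp only [hK]
    rw [if_neg (by omega)]
    simp
  · obtain ⟨hN, hb⟩ := no_case e h
    refine ⟨NN e, le_refl _, ?_⟩
    rw [memA (e+1) (NN e) (by omega), hb (NN e)]
    rw [if_neg (by omega)]
    simp

lemma exists_out : ∃ n, NN e ≤ n ∧ n ∉ A := by
  by_cases h : Q e (NN e)
  · obtain ⟨hN, hb⟩ := yes_case e h
    set K := NN e + (Classical.choose h).1.length + (Classical.choose h).2.length with hK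
    refine ⟨K + 1, by omega, ?_⟩
    rw [memA (e+1) (K+1) (by omega), hb (K+1)]
    simp only [hK]
    rw [if_neg (by omega)]
    rw [List.getD_eq_default _ _ (by omega), List.getD_eq_default _ _ (by omega)]
    simp
  · obtain ⟨hN, hb⟩ := no_case e h
    refine ⟨NN e + 1, by omega, ?_⟩
    rw [memA (e+1) (NN e + 1) (by omega), hb (NN e + 1)]
    rw [if_neg (by omega)]
    simp

end stage

lemma A_infinite : A.Infinite := by
  apply Set.infinite_of_forall_exists_gt
  intro a
  obtain ⟨n, hn, hA⟩ := exists_in (a + 1)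
  exact ⟨n, hA, by have := N_ge (a + 1); omega⟩

lemma A_coinfinite : Aᶜ.Infinite := by
  apply Set.infinite_of_forall_exists_gt
  intro a
  obtain ⟨n, hn, hA⟩ := exists_out (a + 1)
  exact ⟨n, hA, by have := N_ge (a + 1); omega⟩

lemma getD_true_mem_A {e : ℕ} (h : Q e (NN e)) :
    (∀ i, (Classical.choose h).1.getD i false = true → i ∈ A) ∧
    (∀ i, (Classical.choose h).2.getD i false = true → i ∈ A) := by
  obtain ⟨hN, hb⟩ := yes_case e h
  obtain ⟨hW, h1, h2⟩ := Classical.choose_spec h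
  constructor
  · intro i hi
    have hlen : i < (Classical.choose h).1.length := by
      by_contra hc
      rw [List.getD_eq_default _ _ (by omega)] at hi; exact Bool.false_ne_true hi
    rw [memA (e+1) i (by omega), hb i, if_neg (by have := h1 i hi; omega), hi]
    simp
  · intro i hi
    have hlen : i < (Classical.choose h).2.length := by
      by_contra hc
      rw [List.getD_eq_default _ _ (by omega)] at hi; exact Bool.false_ne_true hi
    rw [memA (e+1) i (by omega), hb i, if_neg (by have := h2 i hi; omega), hi]
    simp

/-- If every true position of `w` is in `A`, the canonical extension of `w` by `χ_A`
is an `A`-name extending `w`. -/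
lemma name_of_string {w : List Bool} (hw : ∀ i, w.getD i false = true → i ∈ A) :
    ∃ p : ℕ → Bool, IsBoolPrefix w p ∧ IsAName A p := by
  classical
  refine ⟨fun n => if n < w.length then w.getD n false else decide (n ∈ A), ?_, ?_, ?_⟩
  · intro i h
    show (if i < w.length then w.getD i false else decide (i ∈ A)) = w.get ⟨i, h⟩
    rw [if_pos h, List.getD_eq_getElem _ _ h, List.get_eq_getElem]
  · intro n hn
    simp only [Set.mem_setOf_eq] at hn
    by_cases h : n < w.length
    · rw [if_pos h] at hn; exact hw n hn
    · rw [if_neg h] at hn; exact of_decide_eq_true hn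
  · apply Set.Finite.subset (Set.finite_Iio w.length)
    intro n hn
    simp only [Set.mem_diff, Set.mem_setOf_eq] at hn
    obtain ⟨hnA, hnp⟩ := hn
    simp only [Set.mem_Iio]
    by_contra hc
    exact hnp (by rw [if_neg (by omega)]; simpa using hnA)

lemma main (e : ℕ) :
    ¬ ((∀ wu ∈ FSet e, ∀ p q : ℕ → Bool,
          IsBoolPrefix wu.1 p → IsBoolPrefix wu.2 q →
            ¬ (IsAName A p ∧ IsAName A q) ∧ ¬ (IsCoAName A p ∧ IsCoAName A q)) ∧
        (∀ p q : ℕ → Bool,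
          (IsAName A p ∧ IsCoAName A q) ∨ (IsCoAName A p ∧ IsAName A q) →
            ∃ wu ∈ FSet e, IsBoolPrefix wu.1 p ∧ IsBoolPrefix wu.2 q)) := by
  rintro ⟨hs, hc⟩
  by_cases h : Q e (NN e)
  · -- soundness fails
    obtain ⟨hmem1, hmem2⟩ := getD_true_mem_A h
    obtain ⟨hW, -, -⟩ := Classical.choose_spec h
    obtain ⟨p, hp, hpA⟩ := name_of_string hmem1
    obtain ⟨q, hq, hqA⟩ := name_of_string hmem2
    exact (hs _ hW p q hp hq).1 ⟨hpA, hqA⟩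
  · -- completeness fails
    apply h
    set p : ℕ → Bool := fun n => if n < NN e then false else decide (n ∈ A) with hp
    set q : ℕ → Bool := fun n => if n < NN e then false else decide (n ∉ A) with hq
    have hpA : IsAName A p := by
      constructor
      · intro n hn
        simp only [Set.mem_setOf_eq, hp] at hn
        by_cases h' : n < NN e
        · rw [if_pos h'] at hn; exact absurd hn (by simp)
        · rw [if_neg h'] at hn; exact of_decide_eq_true hn
      · apply Set.Finite.subset (Set.finite_Iio (NN e))
        intro n hn
        obtain ⟨hnA, hnp⟩ := hn
        simp only [Set.mem_Iio]
        by_contra hcn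
        exact hnp (by simp only [Set.mem_setOf_eq, hp]; rw [if_neg (by omega)]; simpa using hnA)
    have hqA : IsCoAName A q := by
      constructor
      · intro n hn
        simp only [Set.mem_setOf_eq, hq] at hn
        by_cases h' : n < NN e
        · rw [if_pos h'] at hn; exact absurd hn (by simp)
        · rw [if_neg h'] at hn; exact of_decide_eq_true hn
      · apply Set.Finite.subset (Set.finite_Iio (NN e))
        intro n hn
        obtain ⟨hnA, hnp⟩ := hn
        simp only [Set.mem_Iio]
        by_contra hcn
        refine hnp ?_
        simp only [Set.mem_setOf_eq, hq]
        rw [if_neg (by omega)]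
        simpa using hnA
    obtain ⟨wu, hwu, hpw, hqw⟩ := hc p q (Or.inl ⟨hpA, hqA⟩)
    refine ⟨wu, hwu, ?_, ?_⟩
    · intro i hi
      have hlen : i < wu.1.length := by
        by_contra hcl
        rw [List.getD_eq_default _ _ (by omega)] at hi; exact Bool.false_ne_true hi
      have := hpw i hlen
      rw [List.getD_eq_getElem _ _ hlen] at hi
      rw [List.get_eq_getElem, hi] at this
      by_contra hcl
      simp only [hp] at this
      rw [if_pos (by omega)] at this
      exact Bool.false_ne_true this
    · intro i hi
      have hlen : i < wu.2.length := by
        by_contra hcl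
        rw [List.getD_eq_default _ _ (by omega)] at hi; exact Bool.false_ne_true hi
      have := hqw i hlen
      rw [List.getD_eq_getElem _ _ hlen] at hi
      rw [List.get_eq_getElem, hi] at this
      by_contra hcl
      simp only [hq] at this
      rw [if_pos (by omega)] at this
      exact Bool.false_ne_true this

end DAHaus

theorem exists_DA_not_computably_hausdorff :
    ∃ A : Set ℕ, A.Infinite ∧ Aᶜ.Infinite ∧
      ¬ ∃ W : Set (List Bool × List Bool),
        REPred (fun wu => wu ∈ W) ∧
        (∀ wu ∈ W, ∀ p q : ℕ → Bool,
          IsBoolPrefix wu.1 p → IsBoolPrefix wu.2 q →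
            ¬ (IsAName A p ∧ IsAName A q) ∧ ¬ (IsCoAName A p ∧ IsCoAName A q)) ∧
        (∀ p q : ℕ → Bool,
          (IsAName A p ∧ IsCoAName A q) ∨ (IsCoAName A p ∧ IsAName A q) →
            ∃ wu ∈ W, IsBoolPrefix wu.1 p ∧ IsBoolPrefix wu.2 q) := by
  refine ⟨DAHaus.A, DAHaus.A_infinite, DAHaus.A_coinfinite, ?_⟩
  rintro ⟨W, hre, hs, hc⟩
  obtain ⟨e, rfl⟩ := DAHaus.exists_index hre
  exact DAHaus.main e ⟨hs, hc⟩
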